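/- arXiv:0902.0877 — 5 statements merged into one kernel-verified Lean document; each statement's English description precedes it below -/
import Mathlib

section
/- The function f(x,y) = (2 + 1/x + 2(y/x) + (y/x)²)·exp(−y/x) is a first integral of the 1-form ω₂ = x²dx + (x+y²)(x dy − y dx) on the open set x ≠ 0; that is, df ∧ ω₂ = 0. -/
/-- f(x,y) = (2 + 1/x + 2(y/x) + (y/x)²)·exp(−y/x) is a first integral of
ω₂ = x²dx + (x+y²)(x dy − y dx) = (x² − (x+y²)y)dx + (x+y²)x dy on x ≠ 0. -/
theorem first_integral_omega2 :
    ∀ x y : ℂ, x ≠ 0 →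
      (x^2 - (x + y^2) * y) *
          deriv (fun y' : ℂ => (2 + 1/x + 2*(y'/x) + (y'/x)^2) * Complex.exp (-(y'/x))) y
        - ((x + y^2) * x) *
          deriv (fun x' : ℂ => (2 + 1/x' + 2*(y/x') + (y/x')^2) * Complex.exp (-(y/x'))) x
        = 0 := by
  intro x y hx
  have hy : HasDerivAt (fun y' : ℂ => (2 + 1/x + 2*(y'/x) + (y'/x)^2) * Complex.exp (-(y'/x)))
      ((0 + 2*(1/x) + 2*(y/x)*(1/x)) * Complex.exp (-(y/x))
        + (2 + 1/x + 2*(y/x) + (y/x)^2) * (Complex.exp (-(y/x)) * (-(1/x)))) y := by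
    have hq : HasDerivAt (fun y' : ℂ => y'/x) (1/x) y := by
      simpa using (hasDerivAt_id y).div_const x
    have hpoly : HasDerivAt (fun y' : ℂ => 2 + 1/x + 2*(y'/x) + (y'/x)^2)
        (0 + 2*(1/x) + 2*(y/x)*(1/x)) y := by
      have := ((hq.const_mul 2).const_add (2 + 1/x)).fun_add
        (hq.fun_pow 2)
      simpa [mul_comm, mul_assoc, mul_left_comm] using this
    have hexp : HasDerivAt (fun y' : ℂ => Complex.exp (-(y'/x)))
        (Complex.exp (-(y/x)) * (-(1/x))) y := (hq.neg).cexp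
    exact hpoly.mul hexp
  have hxinv : HasDerivAt (fun x' : ℂ => 1/x') (-(1/x^2)) x := by
    simpa [one_div] using hasDerivAt_inv hx
  have hq2 : HasDerivAt (fun x' : ℂ => y/x') (y * -(1/x^2)) x := by
    have := hxinv.const_mul y
    simpa [div_eq_mul_inv, one_div, mul_comm] using this
  have hx2 : HasDerivAt (fun x' : ℂ => (2 + 1/x' + 2*(y/x') + (y/x')^2) * Complex.exp (-(y/x')))
      ((-(1/x^2) + 2*(y * -(1/x^2)) + 2*(y/x)*(y * -(1/x^2))) * Complex.exp (-(y/x))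
        + (2 + 1/x + 2*(y/x) + (y/x)^2) * (Complex.exp (-(y/x)) * (-(y * -(1/x^2))))) x := by
    have hpoly : HasDerivAt (fun x' : ℂ => 2 + 1/x' + 2*(y/x') + (y/x')^2)
        (-(1/x^2) + 2*(y * -(1/x^2)) + 2*(y/x)*(y * -(1/x^2))) x := by
      have := ((hxinv.const_add 2).fun_add (hq2.const_mul 2)).fun_add (hq2.fun_pow 2)
      simpa [mul_comm, mul_assoc, mul_left_comm, add_assoc] using this
    have hexp : HasDerivAt (fun x' : ℂ => Complex.exp (-(y/x')))
        (Complex.exp (-(y/x)) * (-(y * -(1/x^2)))) x := (hq2.neg).cexp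
    exact hpoly.mul hexp
  rw [hy.deriv, hx2.deriv]
  set E := Complex.exp (-(y/x)) with hE
  field_simp
  ring_nf
end

section
/- The function f(x,y) = (y/x)·exp((1/2)(y/x)² − 1/x) is a first integral of the 1-form ω₃ = xy dx + (x²+y²)(x dy − y dx) on the open set x ≠ 0. -/
/-- f(x,y) = (y/x)·exp((1/2)(y/x)² − 1/x) is a first integral of
ω₃ = xy dx + (x²+y²)(x dy − y dx) = (xy − (x²+y²)y)dx + (x²+y²)x dy on x ≠ 0. -/
theorem first_integral_omega3 :
    ∀ x y : ℂ, x ≠ 0 →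
      (x*y - (x^2 + y^2) * y) *
          deriv (fun y' : ℂ => (y'/x) * Complex.exp ((1/2) * (y'/x)^2 - 1/x)) y
        - ((x^2 + y^2) * x) *
          deriv (fun x' : ℂ => (y/x') * Complex.exp ((1/2) * (y/x')^2 - 1/x')) x
        = 0 := by
  intro x y hx
  have hdy : HasDerivAt (fun y' : ℂ => y' / x) (1/x) y := by
    simpa using (hasDerivAt_id y).div_const x
  have h1 := hdy.mul (((hdy.pow 2).const_mul ((1:ℂ)/2)).sub_const ((1:ℂ)/x)).cexp
  have hdx : HasDerivAt (fun x' : ℂ => y / x') ((0 * x - y * 1) / x^2) x :=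
    (hasDerivAt_const x y).div (hasDerivAt_id x) hx
  have hix : HasDerivAt (fun x' : ℂ => (1:ℂ) / x') ((0 * x - 1 * 1) / x^2) x :=
    (hasDerivAt_const x (1:ℂ)).div (hasDerivAt_id x) hx
  have h2 := hdx.mul (((hdx.pow 2).const_mul ((1:ℂ)/2)).sub hix).cexp
  rw [(show HasDerivAt (fun y' : ℂ => (y'/x) * Complex.exp ((1/2) * (y'/x)^2 - 1/x)) _ y from h1).deriv,
    (show HasDerivAt (fun x' : ℂ => (y/x') * Complex.exp ((1/2) * (y/x')^2 - 1/x')) _ x from h2).deriv]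
  simp only [Pi.pow_apply, Pi.sub_apply]
  set E := Complex.exp (1 / 2 * (y / x) ^ 2 - 1 / x) with hE
  push_cast
  field_simp
  ring_nf
end

section
/- The 1-form ω₄ = x(x+y²) dx + (x + y² − x²y) dy admits no invariant line in ℂ²: there is no affine line L = {ax + by + c = 0} with (a,b) ≠ (0,0) such that ω₄ ∧ d(ax+by+c) vanishes identically on L (equivalently, such that aQ − bP is divisible by ax+by+c, where P = x(x+y²), Q = x+y²−x²y). -/
open MvPolynomial

/-- ω₄ = P dx + Q dy with P = x(x+y²), Q = x+y²−x²y admits no invariant affine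
line: there are no a, b, c with (a,b) ≠ (0,0) such that ℓ = ax+by+c divides
X(ℓ) = a·Q − b·P (where X = Q ∂/∂x − P ∂/∂y). -/
theorem omega4_no_invariant_line :
    ¬ ∃ a b c : ℂ, (a, b) ≠ (0, 0) ∧
      (C a * X 0 + C b * X 1 + C c : MvPolynomial (Fin 2) ℂ) ∣
        (C a * (X 0 + (X 1)^2 - (X 0)^2 * X 1)
          - C b * (X 0 * (X 0 + (X 1)^2))) := by
  rintro ⟨a, b, c, hab, h, hh⟩
  have key : ∀ x y : ℂ, a * x + b * y + c = 0 →
      a * (x + y^2 - x^2 * y) - b * (x * (x + y^2)) = 0 := by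
    intro x y hxy
    have := congrArg (eval ![x, y]) hh
    simp only [map_add, map_mul, map_sub, map_pow, eval_C, eval_X,
      Matrix.cons_val_zero, Matrix.cons_val_one, Matrix.head_cons] at this
    rw [this, hxy, zero_mul]
  by_cases hb : b = 0
  · -- line is a x + c = 0 with a ≠ 0
    subst hb
    have ha : a ≠ 0 := by
      intro ha; exact hab (by simp [ha])
    -- y = 0 on the line gives c = 0
    have h0 := key (-c / a) 0 (by field_simp; ring)
    have hc : c = 0 := by
      field_simp at h0
      have h0' : a^2 * c = 0 := by linear_combination -h0
      exact (mul_eq_zero.mp h0').resolve_left (pow_ne_zero 2 ha)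
    subst hc
    -- then (0,1) is on the line and gives a = 0
    have h1 := key 0 1 (by ring)
    exact ha (by linear_combination h1)
  · -- b ≠ 0 : points (t, -(a t + c)/b) lie on the line
    have hy : ∀ t : ℂ, a * t + b * (-(a * t + c) / b) + c = 0 := by
      intro t; field_simp; ring
    have G : ∀ t : ℂ, a * t * b^2 + a * (a*t+c)^2 + a * t^2 * b * (a*t+c)
        - b^3 * t^2 - b * t * (a*t+c)^2 = 0 := by
      intro t
      have h3 := key t (-(a * t + c) / b) (hy t)
      field_simp at h3
      have h4 : b^3 * (a * t * b^2 + a * (a*t+c)^2 + a * t^2 * b * (a*t+c)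
          - b^3 * t^2 - b * t * (a*t+c)^2) = 0 := by linear_combination b^3 * h3
      exact (mul_eq_zero.mp h4).resolve_left (pow_ne_zero 3 hb)
    have G0 := G 0
    have G1 := G 1
    have Gm := G (-1)
    have hac : a * c^2 = 0 := by linear_combination G0
    rcases mul_eq_zero.mp hac with ha | hc2
    · rw [ha] at G1 Gm
      have hb3 : b^3 = 0 := by linear_combination (-1/2 : ℂ) * G1 - (1/2 : ℂ) * Gm
      exact hb (pow_eq_zero_iff (n := 3) (by norm_num) |>.mp hb3)
    · have hc : c = 0 := pow_eq_zero_iff (n := 2) (by norm_num) |>.mp hc2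
      subst hc
      have hab2 : a * b^2 = 0 := by linear_combination (1/2 : ℂ) * G1 - (1/2 : ℂ) * Gm
      have ha0 : a = 0 := by
        rcases mul_eq_zero.mp hab2 with h' | h'
        · exact h'
        · exact absurd (pow_eq_zero_iff (n := 2) (by norm_num) |>.mp h') hb
      rw [ha0] at G1
      have hb3 : b^3 = 0 := by linear_combination -G1
      exact hb (pow_eq_zero_iff (n := 3) (by norm_num) |>.mp hb3)
end

section
/- For every β ∈ ℂ, the birational map φ(x,y) = (x/(1+βx), y/(1+βx)) preserves the foliation F₁ defined by ω₁ = x²dx + y²(x dy − y dx): on the open set 1+βx ≠ 0, φ*ω₁ = (1+βx)^{-4}·ω₁. -/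
/-- For β ∈ ℂ, the map φ(x,y) = (x/(1+βx), y/(1+βx)) preserves the foliation of
ω₁ = (x²−y³)dx + xy²dy : on 1+βx ≠ 0, φ*ω₁ = (1+βx)⁻⁴·ω₁, componentwise. -/
theorem isotropy_omega1_birational (β : ℂ) :
    ∀ x y : ℂ, 1 + β*x ≠ 0 →
      (((x/(1+β*x))^2 - (y/(1+β*x))^3) * deriv (fun x' : ℂ => x'/(1+β*x')) x
          + ((x/(1+β*x)) * (y/(1+β*x))^2) * deriv (fun x' : ℂ => y/(1+β*x')) x
        = (1+β*x)^(-4 : ℤ) * (x^2 - y^3)) ∧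
      (((x/(1+β*x))^2 - (y/(1+β*x))^3) * deriv (fun y' : ℂ => x/(1+β*x)) y
          + ((x/(1+β*x)) * (y/(1+β*x))^2) * deriv (fun y' : ℂ => y'/(1+β*x)) y
        = (1+β*x)^(-4 : ℤ) * (x * y^2)) := by
  intro x y h
  have hd : HasDerivAt (fun x' : ℂ => 1 + β*x') β x := by
    simpa using ((hasDerivAt_id x).const_mul β).const_add 1
  have h1 : deriv (fun x' : ℂ => x'/(1+β*x')) x = 1/(1+β*x)^2 := by
    have := ((hasDerivAt_id' (x := x)).div hd h).deriv
    rw [show (fun x' : ℂ => x'/(1+β*x')) = (fun x => x) / (fun x' => 1 + β * x') from rfl, this]; field_simp; ring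
  have h2 : deriv (fun x' : ℂ => y/(1+β*x')) x = -(y*β)/(1+β*x)^2 := by
    have := ((hasDerivAt_const x y).div hd h).deriv
    rw [show (fun x' : ℂ => y/(1+β*x')) = (fun _ => y) / (fun x' => 1 + β * x') from rfl, this]; field_simp; ring
  have h3 : deriv (fun y' : ℂ => x/(1+β*x)) y = 0 := deriv_const _ _
  have h4 : deriv (fun y' : ℂ => y'/(1+β*x)) y = 1/(1+β*x) := by
    simp [div_eq_mul_inv]
  rw [h1, h2, h3, h4]
  have hz : ((1+β*x):ℂ)^(-4 : ℤ) = ((1+β*x)^4)⁻¹ := by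
    rw [zpow_neg, ← zpow_natCast]; norm_num
  rw [hz]
  have h' : 1 + x*β ≠ 0 := by rwa [mul_comm]
  refine ⟨by field_simp [h, h']; ring, ?_⟩
  field_simp [h]
  ring
end

section
/- For every β ∈ ℂ, the map φ(x,y) = (x/(1+βy), y/(1+βy)) preserves the foliation F₅ defined by ω₅ = x²dy + y²(x dy − y dx): on the open set 1+βy ≠ 0, φ*ω₅ = (1+βy)^{-4}·ω₅. -/
/-- For β ∈ ℂ, the map φ(x,y) = (x/(1+βy), y/(1+βy)) preserves the foliation of
ω₅ = −y³dx + (x²+xy²)dy : on 1+βy ≠ 0, φ*ω₅ = (1+βy)⁻⁴·ω₅, componentwise. -/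
theorem isotropy_omega5_birational (β : ℂ) :
    ∀ x y : ℂ, 1 + β*y ≠ 0 →
      ((-(y/(1+β*y))^3) * deriv (fun x' : ℂ => x'/(1+β*y)) x
          + ((x/(1+β*y))^2 + (x/(1+β*y)) * (y/(1+β*y))^2) *
              deriv (fun x' : ℂ => y/(1+β*y)) x
        = (1+β*y)^(-4 : ℤ) * (-(y^3))) ∧
      ((-(y/(1+β*y))^3) * deriv (fun y' : ℂ => x/(1+β*y')) y
          + ((x/(1+β*y))^2 + (x/(1+β*y)) * (y/(1+β*y))^2) *
              deriv (fun y' : ℂ => y'/(1+β*y')) y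
        = (1+β*y)^(-4 : ℤ) * (x^2 + x*y^2)) := by
  intro x y hne
  have h1 : HasDerivAt (fun y' : ℂ => 1 + β*y') β y := by
    simpa using ((hasDerivAt_id y).const_mul β).const_add 1
  have h2 : HasDerivAt (fun y' : ℂ => x/(1+β*y')) (-(x*β)/(1+β*y)^2) y := by
    simpa [div_eq_mul_inv, mul_comm, mul_assoc, mul_left_comm, neg_div] using
      (h1.inv hne).const_mul x
  have h3 : HasDerivAt (fun y' : ℂ => y'/(1+β*y')) ((1*(1+β*y) - y*β)/(1+β*y)^2) y := by
    simpa [Pi.div_def] using (hasDerivAt_id y).div h1 hne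
  have d1 : deriv (fun x' : ℂ => x'/(1+β*y)) x = 1/(1+β*y) := by
    simp [deriv_div_const]
  have d2 : deriv (fun _ : ℂ => y/(1+β*y)) x = 0 := deriv_const _ _
  have hz : ∀ c : ℂ, (1+β*y)^(-4:ℤ) * c = c / (1+β*y)^4 := by
    intro c
    rw [zpow_neg, inv_mul_eq_div, show ((4:ℤ) = ((4:ℕ):ℤ)) from rfl, zpow_natCast]
  -- the abstract single-variable computation
  have main : ∀ u : ℂ, u ≠ 0 → u = 1 + β*y →
      ((-(y/u)^3) * (1/u) + ((x/u)^2 + (x/u) * (y/u)^2) * 0 = (-(y^3))/u^4) ∧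
      ((-(y/u)^3) * (-(x*β)/u^2) + ((x/u)^2 + (x/u) * (y/u)^2) * ((1*u - y*β)/u^2)
          = (x^2 + x*y^2)/u^4) := by
    intro u hu hrel
    have e2 : (x/u)^2 + (x/u) * (y/u)^2 = (x^2*u + x*y^2)/u^3 := by
      rw [div_pow, div_pow, div_mul_div_comm,
        div_add_div _ _ (pow_ne_zero 2 hu) (mul_ne_zero hu (pow_ne_zero 2 hu)),
        div_eq_div_iff (mul_ne_zero (pow_ne_zero 2 hu)
          (mul_ne_zero hu (pow_ne_zero 2 hu))) (pow_ne_zero 3 hu)]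
      ring
    constructor
    · rw [e2, mul_zero, add_zero, div_pow, neg_div, neg_mul, div_mul_div_comm, mul_one,
        ← pow_succ]
    · have e1 : (-(y/u)^3) * (-(x*β)/u^2) = (y^3*(x*β))/u^5 := by
        rw [div_pow, neg_div, neg_mul_neg, div_mul_div_comm, ← pow_add]
      rw [e1, e2, div_mul_div_comm,
        div_add_div _ _ (pow_ne_zero 5 hu) (mul_ne_zero (pow_ne_zero 3 hu) (pow_ne_zero 2 hu)),
        div_eq_div_iff (mul_ne_zero (pow_ne_zero 5 hu)
          (mul_ne_zero (pow_ne_zero 3 hu) (pow_ne_zero 2 hu))) (pow_ne_zero 4 hu)]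
      subst hrel
      ring
  obtain ⟨m1, m2⟩ := main (1+β*y) hne rfl
  constructor
  · rw [d1, d2, hz]
    exact m1
  · rw [h2.deriv, h3.deriv, hz]
    exact m2
end
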